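/- Let L, c > 0 and T > 2L/c. There exists a constant C > 0 (depending only on T, L, c) such that for every C² function v : [0,L] × [0,T] → ℝ satisfying v_tt = c² v_xx on (0,L) × (0,T) with v(0,t) = 0 and v_x(L,t) = 0 for all t ∈ [0,T], one has ∫₀^T |v_t(L,t)|² dt ≥ C·E(0), where E(0) = (1/2)∫₀^L ( v_t(x,0)² + c² v_x(x,0)² ) dx. -/

import Mathlib

open Set

open Asymptotics Topology Filter MeasureTheory intervalIntegral



lemma sliceX {g : ℝ → ℝ → ℝ} {s u : Set ℝ}
    (hg : ContinuousOn (fun p : ℝ × ℝ => g p.1 p.2) (s ×ˢ u)) {t : ℝ} (ht : t ∈ u) :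
    ContinuousOn (fun y => g y t) s :=
  hg.comp ((continuous_id.prodMk continuous_const).continuousOn)
    (fun z hz => mk_mem_prod hz ht)

lemma sliceT {g : ℝ → ℝ → ℝ} {s u : Set ℝ}
    (hg : ContinuousOn (fun p : ℝ × ℝ => g p.1 p.2) (s ×ˢ u)) {x : ℝ} (hx : x ∈ s) :
    ContinuousOn (fun r => g x r) u :=
  hg.comp ((continuous_const.prodMk continuous_id).continuousOn)
    (fun z hz => mk_mem_prod hx hz)

/-- If `f : ℝ → ℝ → ℝ` has partial derivatives `fx`, `ft` within a closed rectangle,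
and these partials are (jointly) continuous on the rectangle, then `f` (as a function of
the pair) is differentiable within the rectangle, with the obvious derivative. -/
lemma hasFDerivWithinAt_of_partials (a b a' b' : ℝ) (f fx ft : ℝ → ℝ → ℝ)
    (hfx : ∀ x ∈ Icc a b, ∀ t ∈ Icc a' b',
      HasDerivWithinAt (fun y => f y t) (fx x t) (Icc a b) x)
    (hft : ∀ x ∈ Icc a b, ∀ t ∈ Icc a' b',
      HasDerivWithinAt (fun s => f x s) (ft x t) (Icc a' b') t)
    (hcx : ContinuousOn (fun p : ℝ × ℝ => fx p.1 p.2) (Icc a b ×ˢ Icc a' b'))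
    (hct : ContinuousOn (fun p : ℝ × ℝ => ft p.1 p.2) (Icc a b ×ˢ Icc a' b'))
    {x t : ℝ} (hx : x ∈ Icc a b) (ht : t ∈ Icc a' b') :
    HasFDerivWithinAt (fun p : ℝ × ℝ => f p.1 p.2)
      ((fx x t) • (ContinuousLinearMap.fst ℝ ℝ ℝ) + (ft x t) • (ContinuousLinearMap.snd ℝ ℝ ℝ))
      (Icc a b ×ˢ Icc a' b') (x, t) := by
  have hQ : (x, t) ∈ Icc a b ×ˢ Icc a' b' := mk_mem_prod hx ht
  refine HasFDerivWithinAt.of_isLittleO ?_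
  rw [isLittleO_iff]
  intro ε hε
  have h1 := hcx _ hQ
  have h2 := hct _ hQ
  rw [Metric.continuousWithinAt_iff] at h1 h2
  obtain ⟨δ1, hδ1, H1⟩ := h1 (ε/2) (by positivity)
  obtain ⟨δ2, hδ2, H2⟩ := h2 (ε/2) (by positivity)
  have hmem : ∀ᶠ p in 𝓝[Icc a b ×ˢ Icc a' b'] (x, t), p ∈ Icc a b ×ˢ Icc a' b' :=
    eventually_mem_nhdsWithin
  have hball : ∀ᶠ p in 𝓝[Icc a b ×ˢ Icc a' b'] (x, t), dist p (x, t) < min δ1 δ2 :=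
    eventually_nhdsWithin_of_eventually_nhds
      (Metric.eventually_nhds_iff_ball.2 ⟨min δ1 δ2, lt_min hδ1 hδ2, fun y hy => hy⟩)
  filter_upwards [hmem, hball] with p hp hpd
  obtain ⟨x', t'⟩ := p
  have hx' : x' ∈ Icc a b := hp.1
  have ht' : t' ∈ Icc a' b' := hp.2
  have hdx : dist x' x < min δ1 δ2 := lt_of_le_of_lt (le_max_left _ _) (by
    rw [Prod.dist_eq] at hpd; exact hpd)
  have hdt : dist t' t < min δ1 δ2 := lt_of_le_of_lt (le_max_right _ _) (by
    rw [Prod.dist_eq] at hpd; exact hpd)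
  -- first piece : integral identity in x
  have e1 : f x' t' - f x t' - fx x t * (x' - x)
      = ∫ y in x..x', (fx y t' - fx x t) := by
    have hF : ∀ y ∈ Ioo (min x x') (max x x'),
        HasDerivWithinAt (fun y => f y t' - fx x t * y) (fx y t' - fx x t) (Ioi y) y := by
      intro y hy
      have hyI : y ∈ Icc a b := by
        constructor
        · exact le_trans (le_min hx.1 hx'.1) hy.1.le
        · exact le_trans hy.2.le (max_le hx.2 hx'.2)
      have hint : Icc a b ∈ 𝓝 y := by
        refine Icc_mem_nhds ?_ ?_
        · exact lt_of_le_of_lt (le_min hx.1 hx'.1) hy.1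
        · exact lt_of_lt_of_le hy.2 (max_le hx.2 hx'.2)
      have := ((hfx y hyI t' ht').hasDerivAt hint).sub
        ((hasDerivAt_id y).const_mul (fx x t))
      have h' := this.hasDerivWithinAt (s := Ioi y); rw [mul_one] at h'; exact h'
    have hcont : ContinuousOn (fun y => f y t' - fx x t * y) (uIcc x x') := by
      apply ContinuousOn.sub
      · intro y hy
        have hyI : y ∈ Icc a b := by
          rcases hy with ⟨h1', h2'⟩
          exact ⟨le_trans (le_min hx.1 hx'.1) h1', le_trans h2' (max_le hx.2 hx'.2)⟩
        exact ((hfx y hyI t' ht').continuousWithinAt).mono (fun z hz => by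
          rcases hz with ⟨h1', h2'⟩
          exact ⟨le_trans (le_min hx.1 hx'.1) h1', le_trans h2' (max_le hx.2 hx'.2)⟩)
      · exact (continuous_const.mul continuous_id).continuousOn
    have hint : IntervalIntegrable (fun y => fx y t' - fx x t) MeasureTheory.volume x x' := by
      apply ContinuousOn.intervalIntegrable
      apply ContinuousOn.sub _ continuousOn_const
      exact (sliceX hcx ht').mono (fun z hz => ⟨le_trans (le_min hx.1 hx'.1) hz.1,
        le_trans hz.2 (max_le hx.2 hx'.2)⟩)
    have := intervalIntegral.integral_eq_sub_of_hasDeriv_right hcont hF hint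
    rw [this]; ring
  have e2 : f x t' - f x t - ft x t * (t' - t)
      = ∫ s in t..t', (ft x s - ft x t) := by
    have hF : ∀ s ∈ Ioo (min t t') (max t t'),
        HasDerivWithinAt (fun s => f x s - ft x t * s) (ft x s - ft x t) (Ioi s) s := by
      intro s hs
      have hsI : s ∈ Icc a' b' :=
        ⟨le_trans (le_min ht.1 ht'.1) hs.1.le, le_trans hs.2.le (max_le ht.2 ht'.2)⟩
      have hint : Icc a' b' ∈ 𝓝 s :=
        Icc_mem_nhds (lt_of_le_of_lt (le_min ht.1 ht'.1) hs.1)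
          (lt_of_lt_of_le hs.2 (max_le ht.2 ht'.2))
      have := ((hft x hx s hsI).hasDerivAt hint).sub
        ((hasDerivAt_id s).const_mul (ft x t))
      have h' := this.hasDerivWithinAt (s := Ioi s); rw [mul_one] at h'; exact h'
    have hcont : ContinuousOn (fun s => f x s - ft x t * s) (uIcc t t') := by
      apply ContinuousOn.sub
      · intro s hs
        have hsI : s ∈ Icc a' b' :=
          ⟨le_trans (le_min ht.1 ht'.1) hs.1, le_trans hs.2 (max_le ht.2 ht'.2)⟩
        exact ((hft x hx s hsI).continuousWithinAt).mono (fun z hz =>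
          ⟨le_trans (le_min ht.1 ht'.1) hz.1, le_trans hz.2 (max_le ht.2 ht'.2)⟩)
      · exact (continuous_const.mul continuous_id).continuousOn
    have hint : IntervalIntegrable (fun s => ft x s - ft x t) MeasureTheory.volume t t' := by
      apply ContinuousOn.intervalIntegrable
      apply ContinuousOn.sub _ continuousOn_const
      exact (sliceT hct hx).mono (fun z hz =>
        ⟨le_trans (le_min ht.1 ht'.1) hz.1, le_trans hz.2 (max_le ht.2 ht'.2)⟩)
    have := intervalIntegral.integral_eq_sub_of_hasDeriv_right hcont hF hint
    rw [this]; ring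
  have b1 : ‖∫ y in x..x', (fx y t' - fx x t)‖ ≤ (ε/2) * |x' - x| := by
    apply intervalIntegral.norm_integral_le_of_norm_le_const
    intro y hy
    have hy1 : min x x' < y := hy.1
    have hy2 : y ≤ max x x' := hy.2
    have hyI : y ∈ Icc a b :=
      ⟨le_trans (le_min hx.1 hx'.1) hy1.le, le_trans hy2 (max_le hx.2 hx'.2)⟩
    have habs : |y - x| ≤ |x' - x| := by
      have h1' : min x x' ≤ x := min_le_left _ _
      have h2' : x ≤ max x x' := le_max_left _ _
      have h3' : max x x' - min x x' = |x' - x| := max_sub_min_eq_abs x x'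
      rw [abs_le]
      constructor <;> [linarith [neg_abs_le (x' - x)]; linarith [le_abs_self (x' - x)]]
    have hyd : dist (y, t') (x, t) < δ1 := by
      rw [Prod.dist_eq]
      apply max_lt
      · rw [Real.dist_eq]
        calc |y - x| ≤ |x' - x| := habs
          _ = dist x' x := (Real.dist_eq _ _).symm
          _ < min δ1 δ2 := hdx
          _ ≤ δ1 := min_le_left _ _
      · exact lt_of_lt_of_le hdt (min_le_left _ _)
    have := H1 (mk_mem_prod hyI ht') hyd
    rw [dist_eq_norm] at this
    exact this.le
  have b2 : ‖∫ s in t..t', (ft x s - ft x t)‖ ≤ (ε/2) * |t' - t| := by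
    apply intervalIntegral.norm_integral_le_of_norm_le_const
    intro s hs
    have hsI : s ∈ Icc a' b' :=
      ⟨le_trans (le_min ht.1 ht'.1) hs.1.le, le_trans hs.2 (max_le ht.2 ht'.2)⟩
    have habs : |s - t| ≤ |t' - t| := by
      have h1' : min t t' ≤ t := min_le_left _ _
      have h2' : t ≤ max t t' := le_max_left _ _
      have h3' : max t t' - min t t' = |t' - t| := max_sub_min_eq_abs t t'
      have hs1 := hs.1
      have hs2 := hs.2
      rw [abs_le]
      constructor <;> [linarith [neg_abs_le (t' - t)]; linarith [le_abs_self (t' - t)]]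
    have hsd : dist (x, s) (x, t) < δ2 := by
      rw [Prod.dist_eq]
      apply max_lt
      · simpa using hδ2
      · rw [Real.dist_eq]
        calc |s - t| ≤ |t' - t| := habs
          _ = dist t' t := (Real.dist_eq _ _).symm
          _ < min δ1 δ2 := hdt
          _ ≤ δ2 := min_le_right _ _
    have := H2 (mk_mem_prod hx hsI) hsd
    rw [dist_eq_norm] at this
    exact this.le
  have happ : ((fx x t) • (ContinuousLinearMap.fst ℝ ℝ ℝ)
        + (ft x t) • (ContinuousLinearMap.snd ℝ ℝ ℝ)) ((x', t') - (x, t))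
      = fx x t * (x' - x) + ft x t * (t' - t) := by
    simp [ContinuousLinearMap.add_apply, Prod.mk_sub_mk, smul_eq_mul]
  have hsplit : f x' t' - f x t
        - ((fx x t) • (ContinuousLinearMap.fst ℝ ℝ ℝ)
          + (ft x t) • (ContinuousLinearMap.snd ℝ ℝ ℝ)) ((x', t') - (x, t))
      = (f x' t' - f x t' - fx x t * (x' - x)) + (f x t' - f x t - ft x t * (t' - t)) := by
    rw [happ]; ring
  have hnorm : ‖(x', t') - (x, t)‖ = max |x' - x| |t' - t| := by
    rw [Prod.mk_sub_mk, Prod.norm_def]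
    simp [Real.norm_eq_abs]
  calc ‖f x' t' - f x t
        - ((fx x t) • (ContinuousLinearMap.fst ℝ ℝ ℝ)
          + (ft x t) • (ContinuousLinearMap.snd ℝ ℝ ℝ)) ((x', t') - (x, t))‖
      = ‖(f x' t' - f x t' - fx x t * (x' - x)) + (f x t' - f x t - ft x t * (t' - t))‖ := by
        rw [hsplit]
    _ ≤ ‖f x' t' - f x t' - fx x t * (x' - x)‖ + ‖f x t' - f x t - ft x t * (t' - t)‖ :=
        norm_add_le _ _
    _ ≤ (ε/2) * |x' - x| + (ε/2) * |t' - t| := by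
        rw [e1, e2]; exact add_le_add b1 b2
    _ ≤ ε * ‖(x', t') - (x, t)‖ := by
        rw [hnorm]
        have h1' : |x' - x| ≤ max |x' - x| |t' - t| := le_max_left _ _
        have h2' : |t' - t| ≤ max |x' - x| |t' - t| := le_max_right _ _
        nlinarith [abs_nonneg (x' - x), abs_nonneg (t' - t), le_max_left |x' - x| |t' - t|]

lemma eq_of_hasDerivWithinAt_zero {g : ℝ → ℝ} {s1 s2 : ℝ} (h12 : s1 ≤ s2)
    (hg : ∀ s ∈ Icc s1 s2, HasDerivWithinAt g 0 (Icc s1 s2) s) : g s2 = g s1 := by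
  have h := (convex_Icc s1 s2).norm_image_sub_le_of_norm_hasDerivWithin_le
    (f' := fun _ => (0:ℝ)) (C := 0) hg (fun y _ => by simp) (left_mem_Icc.2 h12)
    (right_mem_Icc.2 h12)
  have h0 : ‖g s2 - g s1‖ ≤ 0 := by simpa using h
  have h1 := sub_eq_zero.1 (norm_le_zero_iff.1 h0)
  linarith

/-- A function whose partial derivatives satisfy `ft = -(m * fx)` is constant along the
lines `x = w + m t` (within the rectangle). -/
lemma const_along_char (a b a' b' : ℝ) (f fx ft : ℝ → ℝ → ℝ) (m : ℝ)
    (hfx : ∀ x ∈ Icc a b, ∀ t ∈ Icc a' b',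
      HasDerivWithinAt (fun y => f y t) (fx x t) (Icc a b) x)
    (hft : ∀ x ∈ Icc a b, ∀ t ∈ Icc a' b',
      HasDerivWithinAt (fun s => f x s) (ft x t) (Icc a' b') t)
    (hcx : ContinuousOn (fun p : ℝ × ℝ => fx p.1 p.2) (Icc a b ×ˢ Icc a' b'))
    (hct : ContinuousOn (fun p : ℝ × ℝ => ft p.1 p.2) (Icc a b ×ˢ Icc a' b'))
    (hrel : ∀ x ∈ Icc a b, ∀ t ∈ Icc a' b', ft x t = -(m * fx x t))
    (w s1 s2 : ℝ) (h12 : s1 ≤ s2)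
    (hmaps : ∀ s ∈ Icc s1 s2, (w + m*s) ∈ Icc a b ∧ s ∈ Icc a' b') :
    f (w + m*s2) s2 = f (w + m*s1) s1 := by
  refine eq_of_hasDerivWithinAt_zero (g := fun s => f (w + m*s) s) h12 ?_
  intro s hs
  obtain ⟨hxs, hts⟩ := hmaps s hs
  have hA := hasFDerivWithinAt_of_partials a b a' b' f fx ft hfx hft hcx hct hxs hts
  have hγ : HasDerivWithinAt (fun s : ℝ => ((w + m*s, s) : ℝ × ℝ))
      ((m, 1) : ℝ × ℝ) (Icc s1 s2) s := by
    have h1 : HasDerivAt (fun s : ℝ => w + m*s) m s := by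
      simpa using ((hasDerivAt_id s).const_mul m).const_add w
    exact (h1.prodMk (hasDerivAt_id s)).hasDerivWithinAt
  have hmapsTo : MapsTo (fun s : ℝ => ((w + m*s, s) : ℝ × ℝ)) (Icc s1 s2)
      (Icc a b ×ˢ Icc a' b') := fun r hr => mk_mem_prod (hmaps r hr).1 (hmaps r hr).2
  have hcomp : HasDerivWithinAt (fun r : ℝ => f (w + m*r) r)
      (((fx (w+m*s) s) • (ContinuousLinearMap.fst ℝ ℝ ℝ)
        + (ft (w+m*s) s) • (ContinuousLinearMap.snd ℝ ℝ ℝ)) ((m, 1) : ℝ × ℝ))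
      (Icc s1 s2) s :=
    HasFDerivWithinAt.comp_hasDerivWithinAt (f := fun r : ℝ => ((w + m*r, r) : ℝ × ℝ))
      (x := s) hA hγ hmapsTo
  have hval : ((fx (w+m*s) s) • (ContinuousLinearMap.fst ℝ ℝ ℝ)
      + (ft (w+m*s) s) • (ContinuousLinearMap.snd ℝ ℝ ℝ)) ((m, 1) : ℝ × ℝ) = 0 := by
    simp only [ContinuousLinearMap.add_apply, ContinuousLinearMap.coe_smul',
      Pi.smul_apply, ContinuousLinearMap.coe_fst', ContinuousLinearMap.coe_snd',
      smul_eq_mul, hrel _ hxs _ hts]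
    ring
  rw [hval] at hcomp
  exact hcomp


section Aux
variable (L c T : ℝ) (hL : 0 < L) (hc : 0 < c) (hT : 2*L/c < T)
variable (v vx vt vxx vtt : ℝ → ℝ → ℝ)
variable (hvx : ∀ x ∈ Icc (0:ℝ) L, ∀ t ∈ Icc (0:ℝ) T,
        HasDerivWithinAt (fun y => v y t) (vx x t) (Icc 0 L) x)
variable (hvxx : ∀ x ∈ Icc (0:ℝ) L, ∀ t ∈ Icc (0:ℝ) T,
        HasDerivWithinAt (fun y => vx y t) (vxx x t) (Icc 0 L) x)
variable (hvt : ∀ x ∈ Icc (0:ℝ) L, ∀ t ∈ Icc (0:ℝ) T,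
        HasDerivWithinAt (fun s => v x s) (vt x t) (Icc 0 T) t)
variable (hvtt : ∀ x ∈ Icc (0:ℝ) L, ∀ t ∈ Icc (0:ℝ) T,
        HasDerivWithinAt (fun s => vt x s) (vtt x t) (Icc 0 T) t)
variable (hcvt : ContinuousOn (fun p : ℝ × ℝ => vt p.1 p.2) (Icc 0 L ×ˢ Icc 0 T))
variable (hcvx : ContinuousOn (fun p : ℝ × ℝ => vx p.1 p.2) (Icc 0 L ×ˢ Icc 0 T))
variable (hcvxx : ContinuousOn (fun p : ℝ × ℝ => vxx p.1 p.2) (Icc 0 L ×ˢ Icc 0 T))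
variable (hcvtt : ContinuousOn (fun p : ℝ × ℝ => vtt p.1 p.2) (Icc 0 L ×ˢ Icc 0 T))
variable (hpde' : ∀ x ∈ Icc (0:ℝ) L, ∀ t ∈ Icc (0:ℝ) T, vtt x t = c^2 * vxx x t)

include hL hc hT hvtt hvxx hcvt hcvx hcvxx hcvtt hpde' in
lemma Wkey : ∀ x ∈ Icc (0:ℝ) L, ∀ t ∈ Icc (0:ℝ) T,
    (∫ y in (0:ℝ)..x, vt y t) - (∫ y in (0:ℝ)..x, vt y 0)
      = c^2 * ((∫ s in (0:ℝ)..t, vx x s) - (∫ s in (0:ℝ)..t, vx 0 s)) := by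
  have hT0 : 0 < T := lt_trans (by positivity) hT
  intro x hx t ht
  have hsubx : Icc (0:ℝ) x ⊆ Icc (0:ℝ) L := Icc_subset_Icc le_rfl hx.2
  have hsubt : Icc (0:ℝ) t ⊆ Icc (0:ℝ) T := Icc_subset_Icc le_rfl ht.2
  have hux : uIcc (0:ℝ) x = Icc 0 x := uIcc_of_le hx.1
  have hut : uIcc (0:ℝ) t = Icc 0 t := uIcc_of_le ht.1
  -- FTC in time for each y
  have inner1 : ∀ y ∈ Icc (0:ℝ) L, (∫ s in (0:ℝ)..t, vtt y s) = vt y t - vt y 0 := by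
    intro y hy
    refine integral_eq_sub_of_hasDeriv_right_of_le (f := fun s => vt y s)
      (f' := fun s => vtt y s) ht.1 ?_ ?_ ?_
    · exact (sliceT hcvt hy).mono hsubt
    · intro s hs
      have hsT : s ∈ Icc (0:ℝ) T := ⟨hs.1.le, hs.2.le.trans ht.2⟩
      have hnb : Icc (0:ℝ) T ∈ 𝓝 s := Icc_mem_nhds hs.1 (lt_of_lt_of_le hs.2 ht.2)
      exact ((hvtt y hy s hsT).hasDerivAt hnb).hasDerivWithinAt
    · exact ((sliceT hcvtt hy).mono (hut ▸ hsubt)).intervalIntegrable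
  -- FTC in space for each s
  have inner2 : ∀ s ∈ Icc (0:ℝ) T, (∫ y in (0:ℝ)..x, vxx y s) = vx x s - vx 0 s := by
    intro s hs
    refine integral_eq_sub_of_hasDeriv_right_of_le (f := fun y => vx y s)
      (f' := fun y => vxx y s) hx.1 ?_ ?_ ?_
    · exact (sliceX hcvx hs).mono hsubx
    · intro y hy
      have hyL : y ∈ Icc (0:ℝ) L := ⟨hy.1.le, hy.2.le.trans hx.2⟩
      have hnb : Icc (0:ℝ) L ∈ 𝓝 y := Icc_mem_nhds hy.1 (lt_of_lt_of_le hy.2 hx.2)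
      exact ((hvxx y hyL s hs).hasDerivAt hnb).hasDerivWithinAt
    · exact ((sliceX hcvxx hs).mono (hux ▸ hsubx)).intervalIntegrable
  -- Fubini
  have hfub : (∫ y in (0:ℝ)..x, (∫ s in (0:ℝ)..t, vxx y s))
      = ∫ s in (0:ℝ)..t, (∫ y in (0:ℝ)..x, vxx y s) := by
    rw [intervalIntegral.integral_of_le hx.1, intervalIntegral.integral_of_le ht.1]
    have hI : IntegrableOn (fun p : ℝ × ℝ => vxx p.1 p.2) (Ioc 0 x ×ˢ Ioc 0 t) := by
      refine (hcvxx.integrableOn_compact (isCompact_Icc.prod isCompact_Icc)).mono_set ?_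
      exact prod_mono (Ioc_subset_Icc_self.trans hsubx) (Ioc_subset_Icc_self.trans hsubt)
    have hInt : Integrable (Function.uncurry (fun y s => vxx y s))
        ((volume.restrict (Ioc (0:ℝ) x)).prod (volume.restrict (Ioc (0:ℝ) t))) := by
      rw [Measure.prod_restrict]
      exact hI
    have := MeasureTheory.integral_integral_swap hInt
    simpa only [intervalIntegral.integral_of_le hx.1, intervalIntegral.integral_of_le ht.1]
      using this
  calc (∫ y in (0:ℝ)..x, vt y t) - (∫ y in (0:ℝ)..x, vt y 0)
      = ∫ y in (0:ℝ)..x, (vt y t - vt y 0) := by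
        rw [intervalIntegral.integral_sub
          (((sliceX hcvt ht).mono (hux ▸ hsubx)).intervalIntegrable)
          (((sliceX hcvt (left_mem_Icc.2 hT0.le)).mono (hux ▸ hsubx)).intervalIntegrable)]
    _ = ∫ y in (0:ℝ)..x, (∫ s in (0:ℝ)..t, vtt y s) := by
        refine intervalIntegral.integral_congr (fun y hy => ?_)
        exact (inner1 y (hsubx (hux ▸ hy))).symm
    _ = ∫ y in (0:ℝ)..x, (c^2 * ∫ s in (0:ℝ)..t, vxx y s) := by
        refine intervalIntegral.integral_congr (fun y hy => ?_)
        have hyL : y ∈ Icc (0:ℝ) L := hsubx (hux ▸ hy)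
        rw [← intervalIntegral.integral_const_mul]
        exact intervalIntegral.integral_congr (fun s hs => hpde' y hyL s (hsubt (hut ▸ hs)))
    _ = c^2 * ∫ y in (0:ℝ)..x, (∫ s in (0:ℝ)..t, vxx y s) := by
        rw [intervalIntegral.integral_const_mul]
    _ = c^2 * ∫ s in (0:ℝ)..t, (∫ y in (0:ℝ)..x, vxx y s) := by rw [hfub]
    _ = c^2 * ∫ s in (0:ℝ)..t, (vx x s - vx 0 s) := by
        rw [intervalIntegral.integral_congr (fun s hs => inner2 s (hsubt (hut ▸ hs)))]
    _ = c^2 * ((∫ s in (0:ℝ)..t, vx x s) - (∫ s in (0:ℝ)..t, vx 0 s)) := by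
        rw [intervalIntegral.integral_sub
          (((sliceT hcvx hx).mono (hut ▸ hsubt)).intervalIntegrable)
          (((sliceT hcvx (left_mem_Icc.2 hL.le)).mono (hut ▸ hsubt)).intervalIntegrable)]

noncomputable def Wfun (c : ℝ) (vtf vxf : ℝ → ℝ → ℝ) : ℝ → ℝ → ℝ :=
  fun x t => (∫ y in (0:ℝ)..x, vtf y 0) + c^2 * ∫ s in (0:ℝ)..t, vxf x s

include hcvx in
lemma Wt_deriv : ∀ x ∈ Icc (0:ℝ) L, ∀ t ∈ Icc (0:ℝ) T,
    HasDerivWithinAt (fun s => Wfun c vt vx x s) (c^2 * vx x t) (Icc 0 T) t := by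
  intro x hx t ht
  haveI : Fact (t ∈ Icc (0:ℝ) T) := ⟨ht⟩
  have hint : IntervalIntegrable (fun s => vx x s) volume 0 t :=
    ((sliceT hcvx hx).mono (uIcc_of_le ht.1 ▸ Icc_subset_Icc le_rfl ht.2)).intervalIntegrable
  have hmeas : StronglyMeasurableAtFilter (fun s => vx x s) (𝓝[Icc (0:ℝ) T] t) volume :=
    (sliceT hcvx hx).stronglyMeasurableAtFilter_nhdsWithin measurableSet_Icc t
  have hcw : ContinuousWithinAt (fun s => vx x s) (Icc (0:ℝ) T) t := (sliceT hcvx hx) t ht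
  have h := intervalIntegral.integral_hasDerivWithinAt_right (s := Icc (0:ℝ) T)
    (t := Icc (0:ℝ) T) hint hmeas hcw
  exact (h.const_mul (c^2)).const_add _

include hL hc hT hvtt hvxx hcvt hcvx hcvxx hcvtt hpde' in
lemma Wx_deriv : ∀ x ∈ Icc (0:ℝ) L, ∀ t ∈ Icc (0:ℝ) T,
    HasDerivWithinAt (fun y => Wfun c vt vx y t) (vt x t) (Icc 0 L) x := by
  have hT0 : 0 < T := lt_trans (by positivity) hT
  intro x hx t ht
  have halt : ∀ y ∈ Icc (0:ℝ) L, Wfun c vt vx y t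
      = (∫ z in (0:ℝ)..y, vt z t) + c^2 * ∫ s in (0:ℝ)..t, vx 0 s := by
    intro y hy
    have := Wkey L c T hL hc hT vx vt vxx vtt hvxx hvtt hcvt hcvx hcvxx hcvtt hpde' y hy t ht
    unfold Wfun
    linarith
  have hg : HasDerivWithinAt
      (fun y => (∫ z in (0:ℝ)..y, vt z t) + c^2 * ∫ s in (0:ℝ)..t, vx 0 s)
      (vt x t) (Icc (0:ℝ) L) x := by
    haveI : Fact (x ∈ Icc (0:ℝ) L) := ⟨hx⟩
    have hint : IntervalIntegrable (fun z => vt z t) volume 0 x :=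
      ((sliceX hcvt ht).mono (uIcc_of_le hx.1 ▸ Icc_subset_Icc le_rfl hx.2)).intervalIntegrable
    have hmeas : StronglyMeasurableAtFilter (fun z => vt z t) (𝓝[Icc (0:ℝ) L] x) volume :=
      (sliceX hcvt ht).stronglyMeasurableAtFilter_nhdsWithin measurableSet_Icc x
    have hcw : ContinuousWithinAt (fun z => vt z t) (Icc (0:ℝ) L) x := (sliceX hcvt ht) x hx
    exact (intervalIntegral.integral_hasDerivWithinAt_right (s := Icc (0:ℝ) L)
      (t := Icc (0:ℝ) L) hint hmeas hcw).add_const _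
  exact hg.congr (fun y hy => halt y hy) (halt x hx)

end Aux



/-- boundary observability inequality for the control-free wave
equation: for T > 2L/c there is C > 0 (depending only on T, L, c) with
∫₀ᵀ |v_t(L,t)|² dt ≥ C·E(0) for all C² solutions. -/
theorem wave_observability (L c T : ℝ) (hL : 0 < L) (hc : 0 < c)
    (hT : 2*L/c < T) :
    ∃ C > (0:ℝ), ∀ v vx vt vxx vtt : ℝ → ℝ → ℝ,
      (∀ x ∈ Icc (0:ℝ) L, ∀ t ∈ Icc (0:ℝ) T,
        HasDerivWithinAt (fun y => v y t) (vx x t) (Icc 0 L) x) →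
      (∀ x ∈ Icc (0:ℝ) L, ∀ t ∈ Icc (0:ℝ) T,
        HasDerivWithinAt (fun y => vx y t) (vxx x t) (Icc 0 L) x) →
      (∀ x ∈ Icc (0:ℝ) L, ∀ t ∈ Icc (0:ℝ) T,
        HasDerivWithinAt (fun s => v x s) (vt x t) (Icc 0 T) t) →
      (∀ x ∈ Icc (0:ℝ) L, ∀ t ∈ Icc (0:ℝ) T,
        HasDerivWithinAt (fun s => vt x s) (vtt x t) (Icc 0 T) t) →
      (ContinuousOn (fun p : ℝ × ℝ => v p.1 p.2) (Icc 0 L ×ˢ Icc 0 T) ∧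
        ContinuousOn (fun p : ℝ × ℝ => vx p.1 p.2) (Icc 0 L ×ˢ Icc 0 T) ∧
        ContinuousOn (fun p : ℝ × ℝ => vt p.1 p.2) (Icc 0 L ×ˢ Icc 0 T) ∧
        ContinuousOn (fun p : ℝ × ℝ => vxx p.1 p.2) (Icc 0 L ×ˢ Icc 0 T) ∧
        ContinuousOn (fun p : ℝ × ℝ => vtt p.1 p.2) (Icc 0 L ×ˢ Icc 0 T)) →
      (∀ x ∈ Ioo (0:ℝ) L, ∀ t ∈ Ioo (0:ℝ) T, vtt x t = c^2 * vxx x t) →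
      (∀ t ∈ Icc (0:ℝ) T, v 0 t = 0) →
      (∀ t ∈ Icc (0:ℝ) T, vx L t = 0) →
      C * ((1/2) * ∫ x in (0:ℝ)..L, ((vt x 0)^2 + c^2 * (vx x 0)^2)) ≤
        ∫ t in (0:ℝ)..T, (vt L t)^2 := by
  have h2Lc : 0 < 2*L/c := by positivity
  have hT0 : 0 < T := lt_trans h2Lc hT
  have hLc : 0 < L/c := by positivity
  have hLc2 : L/c < 2*L/c := by
    rw [div_lt_div_iff₀ hc hc]; nlinarith
  have hLcT : L/c < T := lt_trans hLc2 hT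
  have h2LcT : 2*L/c ≤ T := hT.le
  have hcLL : c * (L/c) = L := by field_simp
  have hc2LL : c * (2*L/c) = 2*L := by field_simp
  refine ⟨4/c, by positivity, ?_⟩
  intro v vx vt vxx vtt hvx hvxx hvt hvtt hcont hpde hdir hneu
  obtain ⟨hcv, hcvx, hcvt, hcvxx, hcvtt⟩ := hcont
  have hmemL : L ∈ Icc (0:ℝ) L := right_mem_Icc.2 hL.le
  have hmem0L : (0:ℝ) ∈ Icc (0:ℝ) L := left_mem_Icc.2 hL.le
  have hmem0T : (0:ℝ) ∈ Icc (0:ℝ) T := left_mem_Icc.2 hT0.le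
  -- PDE on the closed rectangle
  have hpde' : ∀ x ∈ Icc (0:ℝ) L, ∀ t ∈ Icc (0:ℝ) T, vtt x t = c^2 * vxx x t := by
    intro x hx t ht
    have hcl : (x, t) ∈ closure (Ioo (0:ℝ) L ×ˢ Ioo (0:ℝ) T) := by
      rw [closure_prod_eq, closure_Ioo hL.ne, closure_Ioo hT0.ne]
      exact mk_mem_prod hx ht
    haveI hne : (𝓝[Ioo (0:ℝ) L ×ˢ Ioo (0:ℝ) T] ((x : ℝ), (t : ℝ))).NeBot :=
      mem_closure_iff_nhdsWithin_neBot.1 hcl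
    have hsub : Ioo (0:ℝ) L ×ˢ Ioo (0:ℝ) T ⊆ Icc (0:ℝ) L ×ˢ Icc (0:ℝ) T :=
      prod_mono Ioo_subset_Icc_self Ioo_subset_Icc_self
    have h1 : Tendsto (fun p : ℝ × ℝ => vtt p.1 p.2)
        (𝓝[Ioo (0:ℝ) L ×ˢ Ioo (0:ℝ) T] (x, t)) (𝓝 (vtt x t)) :=
      (hcvtt (x, t) (mk_mem_prod hx ht)).mono hsub
    have h2 : Tendsto (fun p : ℝ × ℝ => c^2 * vxx p.1 p.2)
        (𝓝[Ioo (0:ℝ) L ×ˢ Ioo (0:ℝ) T] (x, t)) (𝓝 (c^2 * vxx x t)) :=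
      ((continuousOn_const.mul hcvxx) (x, t) (mk_mem_prod hx ht)).mono hsub
    have h3 : Tendsto (fun p : ℝ × ℝ => vtt p.1 p.2)
        (𝓝[Ioo (0:ℝ) L ×ˢ Ioo (0:ℝ) T] (x, t)) (𝓝 (c^2 * vxx x t)) := by
      refine h2.congr' ?_
      filter_upwards [self_mem_nhdsWithin] with p hp
      exact (hpde p.1 hp.1 p.2 hp.2).symm
    exact tendsto_nhds_unique h1 h3
  -- the potential W
  set W : ℝ → ℝ → ℝ := Wfun c vt vx with hWdef
  have hWt : ∀ x ∈ Icc (0:ℝ) L, ∀ t ∈ Icc (0:ℝ) T,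
      HasDerivWithinAt (fun s => W x s) (c^2 * vx x t) (Icc 0 T) t :=
    Wt_deriv L c T vx vt hcvx
  have hWx : ∀ x ∈ Icc (0:ℝ) L, ∀ t ∈ Icc (0:ℝ) T,
      HasDerivWithinAt (fun y => W y t) (vt x t) (Icc 0 L) x :=
    Wx_deriv L c T hL hc hT vx vt vxx vtt hvxx hvtt hcvt hcvx hcvxx hcvtt hpde'
  -- derivative fields for the Riemann invariants
  have hqx : ∀ x ∈ Icc (0:ℝ) L, ∀ t ∈ Icc (0:ℝ) T,
      HasDerivWithinAt (fun y => W y t - c * v y t) (vt x t - c * vx x t) (Icc 0 L) x :=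
    fun x hx t ht => (hWx x hx t ht).sub ((hvx x hx t ht).const_mul c)
  have hqt : ∀ x ∈ Icc (0:ℝ) L, ∀ t ∈ Icc (0:ℝ) T,
      HasDerivWithinAt (fun s => W x s - c * v x s) (c^2 * vx x t - c * vt x t) (Icc 0 T) t :=
    fun x hx t ht => (hWt x hx t ht).sub ((hvt x hx t ht).const_mul c)
  have hpx : ∀ x ∈ Icc (0:ℝ) L, ∀ t ∈ Icc (0:ℝ) T,
      HasDerivWithinAt (fun y => W y t + c * v y t) (vt x t + c * vx x t) (Icc 0 L) x :=
    fun x hx t ht => (hWx x hx t ht).add ((hvx x hx t ht).const_mul c)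
  have hpt : ∀ x ∈ Icc (0:ℝ) L, ∀ t ∈ Icc (0:ℝ) T,
      HasDerivWithinAt (fun s => W x s + c * v x s) (c^2 * vx x t + c * vt x t) (Icc 0 T) t :=
    fun x hx t ht => (hWt x hx t ht).add ((hvt x hx t ht).const_mul c)
  have hcqx : ContinuousOn (fun p : ℝ × ℝ => vt p.1 p.2 - c * vx p.1 p.2)
      (Icc 0 L ×ˢ Icc 0 T) := hcvt.sub (continuousOn_const.mul hcvx)
  have hcqt : ContinuousOn (fun p : ℝ × ℝ => c^2 * vx p.1 p.2 - c * vt p.1 p.2)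
      (Icc 0 L ×ˢ Icc 0 T) :=
    (continuousOn_const.mul hcvx).sub (continuousOn_const.mul hcvt)
  have hcpx : ContinuousOn (fun p : ℝ × ℝ => vt p.1 p.2 + c * vx p.1 p.2)
      (Icc 0 L ×ˢ Icc 0 T) := hcvt.add (continuousOn_const.mul hcvx)
  have hcpt : ContinuousOn (fun p : ℝ × ℝ => c^2 * vx p.1 p.2 + c * vt p.1 p.2)
      (Icc 0 L ×ˢ Icc 0 T) :=
    (continuousOn_const.mul hcvx).add (continuousOn_const.mul hcvt)
  -- characteristic identities
  have qa : ∀ s ∈ Icc (0:ℝ) (L/c),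
      W L s - c * v L s = W (L - c*s) 0 - c * v (L - c*s) 0 := by
    intro s hs
    have hmaps : ∀ r ∈ Icc (0:ℝ) s, (L - c*s + c*r) ∈ Icc (0:ℝ) L ∧ r ∈ Icc (0:ℝ) T := by
      intro r hr
      have hcs : c*s ≤ L := by
        have h1 := (le_div_iff₀ hc).1 hs.2
        nlinarith
      have hcr0 : (0:ℝ) ≤ c*r := mul_nonneg hc.le hr.1
      have hcrs : c*r ≤ c*s := mul_le_mul_of_nonneg_left hr.2 hc.le
      refine ⟨⟨by linarith, by linarith⟩, ⟨hr.1, by linarith [hr.2, hs.2, hLcT.le]⟩⟩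
    have h := const_along_char 0 L 0 T (fun x t => W x t - c * v x t)
      (fun x t => vt x t - c * vx x t) (fun x t => c^2 * vx x t - c * vt x t) c
      hqx hqt hcqx hcqt (fun x _ t _ => by ring) (L - c*s) 0 s hs.1 hmaps
    have h2 : W (L - c*s + c*s) s - c * v (L - c*s + c*s) s
        = W (L - c*s + c*0) 0 - c * v (L - c*s + c*0) 0 := h
    rw [show L - c*s + c*s = L by ring, show L - c*s + c*0 = L - c*s by ring] at h2
    exact h2
  have qb : ∀ s ∈ Icc (L/c) (2*L/c),
      W L s - c * v L s = W 0 (s - L/c) - c * v 0 (s - L/c) := by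
    intro s hs
    have h12 : s - L/c ≤ s := by linarith
    have hmaps : ∀ r ∈ Icc (s - L/c) s,
        (L - c*s + c*r) ∈ Icc (0:ℝ) L ∧ r ∈ Icc (0:ℝ) T := by
      intro r hr
      have h1 : c*(s - r) ≤ c*(L/c) := by
        apply mul_le_mul_of_nonneg_left _ hc.le
        linarith [hr.1]
      rw [hcLL] at h1
      have h0 : (0:ℝ) ≤ c*(s - r) := mul_nonneg hc.le (by linarith [hr.2])
      have hm : c*(s - r) = c*s - c*r := by ring
      refine ⟨⟨by linarith, by linarith⟩, ⟨by linarith [hr.1, hs.1, hLc], by linarith [hr.2, hs.2]⟩⟩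
    have h := const_along_char 0 L 0 T (fun x t => W x t - c * v x t)
      (fun x t => vt x t - c * vx x t) (fun x t => c^2 * vx x t - c * vt x t) c
      hqx hqt hcqx hcqt (fun x _ t _ => by ring) (L - c*s) (s - L/c) s h12 hmaps
    have h2 : W (L - c*s + c*s) s - c * v (L - c*s + c*s) s
        = W (L - c*s + c*(s - L/c)) (s - L/c) - c * v (L - c*s + c*(s - L/c)) (s - L/c) := h
    have e0 : L - c*s + c*(s - L/c) = 0 := by
      rw [mul_sub, hcLL]; ring
    rw [show L - c*s + c*s = L by ring, e0] at h2
    exact h2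
  have pc : ∀ r ∈ Icc (0:ℝ) (L/c),
      W 0 r + c * v 0 r = W (c*r) 0 + c * v (c*r) 0 := by
    intro r hr
    have hmaps : ∀ σ ∈ Icc (0:ℝ) r, (c*r + -c*σ) ∈ Icc (0:ℝ) L ∧ σ ∈ Icc (0:ℝ) T := by
      intro σ hσ
      have h1 : c*(r - σ) ≤ c*(L/c) := by
        apply mul_le_mul_of_nonneg_left _ hc.le
        linarith [hσ.1, hr.2]
      rw [hcLL] at h1
      have h0 : (0:ℝ) ≤ c*(r - σ) := mul_nonneg hc.le (by linarith [hσ.2])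
      have hm : c*(r - σ) = c*r - c*σ := by ring
      refine ⟨⟨by linarith, by linarith⟩, ⟨hσ.1, by linarith [hσ.2, hr.2, hLcT.le]⟩⟩
    have h := const_along_char 0 L 0 T (fun x t => W x t + c * v x t)
      (fun x t => vt x t + c * vx x t) (fun x t => c^2 * vx x t + c * vt x t) (-c)
      hpx hpt hcpx hcpt (fun x _ t _ => by ring) (c*r) 0 r hr.1 hmaps
    have h2 : W (c*r + -c*r) r + c * v (c*r + -c*r) r
        = W (c*r + -c*0) 0 + c * v (c*r + -c*0) 0 := h
    rw [show c*r + -c*r = 0 by ring, show c*r + -c*0 = c*r by ring] at h2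
    exact h2
  -- time derivative of the invariant at x = L
  have hobT : ∀ s ∈ Icc (0:ℝ) T,
      HasDerivWithinAt (fun s => W L s - c * v L s) (-(c * vt L s)) (Icc 0 T) s := by
    intro s hs
    have h := hqt L hmemL s hs
    have e : c^2 * vx L s - c * vt L s = -(c * vt L s) := by rw [hneu s hs]; ring
    rwa [e] at h
  have hsub1 : Icc (0:ℝ) (L/c) ⊆ Icc (0:ℝ) T := Icc_subset_Icc le_rfl hLcT.le
  have hsub2 : Icc (L/c) (2*L/c) ⊆ Icc (0:ℝ) T := Icc_subset_Icc hLc.le h2LcT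
  -- key identity 1
  have key1 : ∀ s ∈ Icc (0:ℝ) (L/c),
      vt L s = vt (L - c*s) 0 - c * vx (L - c*s) 0 := by
    intro s hs
    have hx1 : L - c*s ∈ Icc (0:ℝ) L := by
      have hcs : c*s ≤ L := by
        have h1 := (le_div_iff₀ hc).1 hs.2
        nlinarith
      have : (0:ℝ) ≤ c*s := mul_nonneg hc.le hs.1
      exact ⟨by linarith, by linarith⟩
    have hinner : HasDerivWithinAt (fun r : ℝ => L - c*r) (-c) (Icc (0:ℝ) (L/c)) s := by
      simpa using (((hasDerivAt_id s).const_mul c).const_sub L).hasDerivWithinAt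
    have hmapsx : MapsTo (fun r : ℝ => L - c*r) (Icc (0:ℝ) (L/c)) (Icc (0:ℝ) L) := by
      intro r hr
      have h1 : c*r ≤ c*(L/c) := mul_le_mul_of_nonneg_left hr.2 hc.le
      rw [hcLL] at h1
      have h0 : (0:ℝ) ≤ c*r := mul_nonneg hc.le hr.1
      exact ⟨by show (0:ℝ) ≤ L - c*r; linarith, by show L - c*r ≤ L; linarith⟩
    have hWc : HasDerivWithinAt ((fun y => W y 0) ∘ (fun r : ℝ => L - c*r))
        (vt (L - c*s) 0 * (-c)) (Icc (0:ℝ) (L/c)) s :=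
      HasDerivWithinAt.comp s (hWx (L - c*s) hx1 0 hmem0T) hinner hmapsx
    have hvc : HasDerivWithinAt ((fun y => v y 0) ∘ (fun r : ℝ => L - c*r))
        (vx (L - c*s) 0 * (-c)) (Icc (0:ℝ) (L/c)) s :=
      HasDerivWithinAt.comp s (hvx (L - c*s) hx1 0 hmem0T) hinner hmapsx
    have hg : HasDerivWithinAt (fun r : ℝ => W (L - c*r) 0 - c * v (L - c*r) 0)
        (vt (L - c*s) 0 * (-c) - c * (vx (L - c*s) 0 * (-c))) (Icc (0:ℝ) (L/c)) s :=
      hWc.sub (hvc.const_mul c)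
    have hob2 : HasDerivWithinAt (fun r : ℝ => W L r - c * v L r)
        (vt (L - c*s) 0 * (-c) - c * (vx (L - c*s) 0 * (-c))) (Icc (0:ℝ) (L/c)) s :=
      hg.congr (fun r hr => qa r hr) (qa s hs)
    have hob1 : HasDerivWithinAt (fun r : ℝ => W L r - c * v L r)
        (-(c * vt L s)) (Icc (0:ℝ) (L/c)) s := (hobT s (hsub1 hs)).mono hsub1
    have hud : UniqueDiffWithinAt ℝ (Icc (0:ℝ) (L/c)) s := (uniqueDiffOn_Icc hLc) s hs
    have heq := (hob1.derivWithin hud).symm.trans (hob2.derivWithin hud)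
    have h3 : c * vt L s = c * (vt (L - c*s) 0 - c * vx (L - c*s) 0) := by
      linear_combination -heq
    exact mul_left_cancel₀ hc.ne' h3
  -- key identity 2
  have key2 : ∀ s ∈ Icc (L/c) (2*L/c),
      vt L s = -(vt (c*s - L) 0 + c * vx (c*s - L) 0) := by
    intro s hs
    have hx1 : c*s - L ∈ Icc (0:ℝ) L := by
      have h1 : c*(L/c) ≤ c*s := mul_le_mul_of_nonneg_left hs.1 hc.le
      have h2 : c*s ≤ c*(2*L/c) := mul_le_mul_of_nonneg_left hs.2 hc.le
      rw [hcLL] at h1; rw [hc2LL] at h2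
      exact ⟨by linarith, by linarith⟩
    have hg0 : ∀ r ∈ Icc (L/c) (2*L/c),
        W L r - c * v L r = W (c*r - L) 0 + c * v (c*r - L) 0 := by
      intro r hr
      have hrT : r - L/c ∈ Icc (0:ℝ) T :=
        ⟨by linarith [hr.1], by linarith [hr.2, h2LcT, hLc]⟩
      have hr' : r - L/c ∈ Icc (0:ℝ) (L/c) := by
        constructor
        · linarith [hr.1]
        · have : 2*L/c = L/c + L/c := by ring
          linarith [hr.2]
      have e : c * (r - L/c) = c*r - L := by rw [mul_sub, hcLL]
      calc W L r - c * v L r = W 0 (r - L/c) - c * v 0 (r - L/c) := qb r hr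
        _ = W 0 (r - L/c) + c * v 0 (r - L/c) := by rw [hdir (r - L/c) hrT]; ring
        _ = W (c*(r - L/c)) 0 + c * v (c*(r - L/c)) 0 := pc (r - L/c) hr'
        _ = W (c*r - L) 0 + c * v (c*r - L) 0 := by rw [e]
    have hinner : HasDerivWithinAt (fun r : ℝ => c*r - L) c (Icc (L/c) (2*L/c)) s := by
      simpa using (((hasDerivAt_id s).const_mul c).sub_const L).hasDerivWithinAt
    have hmapsx : MapsTo (fun r : ℝ => c*r - L) (Icc (L/c) (2*L/c)) (Icc (0:ℝ) L) := by
      intro r hr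
      have h1 : c*(L/c) ≤ c*r := mul_le_mul_of_nonneg_left hr.1 hc.le
      have h2 : c*r ≤ c*(2*L/c) := mul_le_mul_of_nonneg_left hr.2 hc.le
      rw [hcLL] at h1; rw [hc2LL] at h2
      exact ⟨by show (0:ℝ) ≤ c*r - L; linarith, by show c*r - L ≤ L; linarith⟩
    have hWc : HasDerivWithinAt ((fun y => W y 0) ∘ (fun r : ℝ => c*r - L))
        (vt (c*s - L) 0 * c) (Icc (L/c) (2*L/c)) s :=
      HasDerivWithinAt.comp s (hWx (c*s - L) hx1 0 hmem0T) hinner hmapsx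
    have hvc : HasDerivWithinAt ((fun y => v y 0) ∘ (fun r : ℝ => c*r - L))
        (vx (c*s - L) 0 * c) (Icc (L/c) (2*L/c)) s :=
      HasDerivWithinAt.comp s (hvx (c*s - L) hx1 0 hmem0T) hinner hmapsx
    have hg : HasDerivWithinAt (fun r : ℝ => W (c*r - L) 0 + c * v (c*r - L) 0)
        (vt (c*s - L) 0 * c + c * (vx (c*s - L) 0 * c)) (Icc (L/c) (2*L/c)) s :=
      hWc.add (hvc.const_mul c)
    have hob2 : HasDerivWithinAt (fun r : ℝ => W L r - c * v L r)
        (vt (c*s - L) 0 * c + c * (vx (c*s - L) 0 * c)) (Icc (L/c) (2*L/c)) s :=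
      hg.congr (fun r hr => hg0 r hr) (hg0 s hs)
    have hob1 : HasDerivWithinAt (fun r : ℝ => W L r - c * v L r)
        (-(c * vt L s)) (Icc (L/c) (2*L/c)) s := (hobT s (hsub2 hs)).mono hsub2
    have hud : UniqueDiffWithinAt ℝ (Icc (L/c) (2*L/c)) s := (uniqueDiffOn_Icc hLc2) s hs
    have heq := (hob1.derivWithin hud).symm.trans (hob2.derivWithin hud)
    have h3 : c * vt L s = c * (-(vt (c*s - L) 0 + c * vx (c*s - L) 0)) := by
      linear_combination -heq
    exact mul_left_cancel₀ hc.ne' h3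
  -- final integral computation
  have hφ : ContinuousOn (fun s => (vt L s)^2) (Icc (0:ℝ) T) := (sliceT hcvt hmemL).pow 2
  have hg1c : ContinuousOn (fun y => (vt y 0 - c * vx y 0)^2) (Icc (0:ℝ) L) :=
    ((sliceX hcvt hmem0T).sub (continuousOn_const.mul (sliceX hcvx hmem0T))).pow 2
  have hg2c : ContinuousOn (fun y => (vt y 0 + c * vx y 0)^2) (Icc (0:ℝ) L) :=
    ((sliceX hcvt hmem0T).add (continuousOn_const.mul (sliceX hcvx hmem0T))).pow 2
  have hint1 : IntervalIntegrable (fun s => (vt L s)^2) volume 0 (L/c) :=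
    (hφ.mono (uIcc_of_le hLc.le ▸ Icc_subset_Icc le_rfl hLcT.le)).intervalIntegrable
  have hint2 : IntervalIntegrable (fun s => (vt L s)^2) volume (L/c) (2*L/c) :=
    (hφ.mono (uIcc_of_le hLc2.le ▸ Icc_subset_Icc hLc.le h2LcT)).intervalIntegrable
  have hint3 : IntervalIntegrable (fun s => (vt L s)^2) volume (2*L/c) T :=
    (hφ.mono (uIcc_of_le h2LcT ▸ Icc_subset_Icc h2Lc.le le_rfl)).intervalIntegrable
  have hint4 : IntervalIntegrable (fun s => (vt L s)^2) volume (L/c) T :=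
    (hφ.mono (uIcc_of_le hLcT.le ▸ Icc_subset_Icc hLc.le le_rfl)).intervalIntegrable
  have esplit : (∫ s in (0:ℝ)..T, (vt L s)^2)
      = (∫ s in (0:ℝ)..(L/c), (vt L s)^2) + (∫ s in (L/c)..(2*L/c), (vt L s)^2)
        + ∫ s in (2*L/c)..T, (vt L s)^2 := by
    have t1 := intervalIntegral.integral_add_adjacent_intervals hint1 hint4
    have t2 := intervalIntegral.integral_add_adjacent_intervals hint2 hint3
    rw [← t1, ← t2]; ring
  have htail : (0:ℝ) ≤ ∫ s in (2*L/c)..T, (vt L s)^2 :=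
    intervalIntegral.integral_nonneg h2LcT (fun u _ => sq_nonneg _)
  -- first piece via substitution
  have eA : (∫ s in (0:ℝ)..(L/c), (vt L s)^2)
      = c⁻¹ * ∫ y in (0:ℝ)..L, (vt y 0 - c * vx y 0)^2 := by
    have e1 : (∫ s in (0:ℝ)..(L/c), (vt L s)^2)
        = ∫ s in (0:ℝ)..(L/c), (fun y => (vt y 0 - c * vx y 0)^2) (-c * s + L) := by
      refine intervalIntegral.integral_congr (fun s hs => ?_)
      have hs' : s ∈ Icc (0:ℝ) (L/c) := uIcc_of_le hLc.le ▸ hs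
      show (vt L s)^2 = (vt (-c*s + L) 0 - c * vx (-c*s + L) 0)^2
      rw [show -c*s + L = L - c*s by ring, key1 s hs']
    have e2 := intervalIntegral.integral_comp_mul_add (a := 0) (b := L/c)
      (fun y => (vt y 0 - c * vx y 0)^2) (neg_ne_zero.2 hc.ne') L
    rw [e1, e2, show -c * 0 + L = L by ring, show -c * (L/c) + L = 0 by
        rw [neg_mul, hcLL]; ring]
    rw [intervalIntegral.integral_symm, smul_eq_mul]
    have : (-c)⁻¹ = -(c⁻¹) := by field_simp
    rw [this]; ring
  -- second piece via substitution
  have eB : (∫ s in (L/c)..(2*L/c), (vt L s)^2)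
      = c⁻¹ * ∫ y in (0:ℝ)..L, (vt y 0 + c * vx y 0)^2 := by
    have e1 : (∫ s in (L/c)..(2*L/c), (vt L s)^2)
        = ∫ s in (L/c)..(2*L/c), (fun y => (vt y 0 + c * vx y 0)^2) (c * s + -L) := by
      refine intervalIntegral.integral_congr (fun s hs => ?_)
      have hs' : s ∈ Icc (L/c) (2*L/c) := uIcc_of_le hLc2.le ▸ hs
      show (vt L s)^2 = (vt (c*s + -L) 0 + c * vx (c*s + -L) 0)^2
      rw [show c*s + -L = c*s - L by ring, key2 s hs', neg_sq]
    have e2 := intervalIntegral.integral_comp_mul_add (a := L/c) (b := 2*L/c)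
      (fun y => (vt y 0 + c * vx y 0)^2) hc.ne' (-L)
    rw [e1, e2, show c * (L/c) + -L = 0 by rw [hcLL]; ring,
      show c * (2*L/c) + -L = L by rw [hc2LL]; ring, smul_eq_mul]
  -- combine
  have hsum : (∫ y in (0:ℝ)..L, (vt y 0 - c * vx y 0)^2)
        + (∫ y in (0:ℝ)..L, (vt y 0 + c * vx y 0)^2)
      = 2 * ∫ x in (0:ℝ)..L, ((vt x 0)^2 + c^2 * (vx x 0)^2) := by
    rw [← intervalIntegral.integral_add
      ((hg1c.mono (uIcc_of_le hL.le ▸ subset_rfl)).intervalIntegrable)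
      ((hg2c.mono (uIcc_of_le hL.le ▸ subset_rfl)).intervalIntegrable)]
    rw [← intervalIntegral.integral_const_mul]
    refine intervalIntegral.integral_congr (fun y _ => ?_)
    ring
  have hfinal : (∫ s in (0:ℝ)..T, (vt L s)^2)
      ≥ c⁻¹ * (2 * ∫ x in (0:ℝ)..L, ((vt x 0)^2 + c^2 * (vx x 0)^2)) := by
    rw [esplit, eA, eB]
    have := htail
    nlinarith [hsum, inv_pos.2 hc]
  calc 4/c * ((1/2) * ∫ x in (0:ℝ)..L, ((vt x 0)^2 + c^2 * (vx x 0)^2))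
      = c⁻¹ * (2 * ∫ x in (0:ℝ)..L, ((vt x 0)^2 + c^2 * (vx x 0)^2)) := by ring
    _ ≤ ∫ s in (0:ℝ)..T, (vt L s)^2 := hfinal
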